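/- arXiv:1909.08996 — 4 statements merged into one kernel-verified Lean document; each statement's English description precedes it below -/
import Mathlib

section
/- Let n ≥ 1 and m ≥ 2 be integers and let i be an integer with 1 ≤ i ≤ n. The number of functions f from an n-element set of voters to an m-element set of classes {c*, c_1, …, c_{m-1}} such that the fiber of the designated class c* has exactly i elements and the fiber of every other class c_j (j = 1, …, m-1) has at most i − 1 elements equals C(n,i) · φ_i · (n−i)!, where φ_i is the coefficient of x^{n−i} in the polynomial expansion of the generating function G^m_i(x) = (Σ_{j=0}^{i−1} x^j / j!)^{m−1}. -/
open Finset



section Counting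

variable {α β : Type*} [Fintype α] [DecidableEq α] [DecidableEq β]

/-- Ordered partitions of `A` indexed by `s` with part sizes `k`. -/
def chopSet [Fintype β] (A : Finset α) (s : Finset β) (k : β → ℕ) : Finset (β → Finset α) :=
  Finset.univ.filter (fun g =>
    (∀ b ∈ s, (g b).card = k b) ∧ (∀ b ∉ s, g b = ∅) ∧
    (∀ b₁ ∈ s, ∀ b₂ ∈ s, b₁ ≠ b₂ → Disjoint (g b₁) (g b₂)) ∧ s.biUnion g = A)

lemma mem_chopSet [Fintype β] {A : Finset α} {s : Finset β} {k : β → ℕ} {g : β → Finset α} :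
    g ∈ chopSet A s k ↔ (∀ b ∈ s, (g b).card = k b) ∧ (∀ b ∉ s, g b = ∅) ∧
    (∀ b₁ ∈ s, ∀ b₂ ∈ s, b₁ ≠ b₂ → Disjoint (g b₁) (g b₂)) ∧ s.biUnion g = A := by
  simp [chopSet]

lemma chop_card [Fintype β] : ∀ (s : Finset β) (k : β → ℕ) (A : Finset α),
    ∑ b ∈ s, k b = A.card → (chopSet A s k).card = Nat.multinomial s k := by
  intro s
  induction s using Finset.cons_induction with
  | empty =>
    intro k A hA
    have hA' : A = ∅ := card_eq_zero.mp (by simpa using hA.symm)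
    subst hA'
    have : chopSet (∅ : Finset α) (∅ : Finset β) k = {fun _ => ∅} := by
      ext g
      simp only [mem_chopSet, mem_singleton]
      constructor
      · rintro ⟨-, h2, -, -⟩
        funext b; exact h2 b (notMem_empty b)
      · rintro rfl
        refine ⟨fun b hb => absurd hb (notMem_empty b), fun _ _ => rfl,
          fun b hb => absurd hb (notMem_empty b), by simp⟩
    rw [this]; simp
  | cons a s' ha ih =>
    intro k A hA
    rw [sum_cons] at hA
    have hmem : ∀ g ∈ chopSet A (cons a s' ha) k, g a ∈ A.powersetCard (k a) := by
      intro g hg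
      rw [mem_chopSet] at hg
      obtain ⟨h1, h2, h3, h4⟩ := hg
      rw [mem_powersetCard]
      exact ⟨h4 ▸ subset_biUnion_of_mem g (mem_cons_self a s'), h1 a (mem_cons_self a s')⟩
    rw [card_eq_sum_card_fiberwise hmem]
    have key : ∀ T ∈ A.powersetCard (k a),
        ((chopSet A (cons a s' ha) k).filter (fun g => g a = T)).card
          = Nat.multinomial s' k := by
      intro T hT
      obtain ⟨hTA, hTc⟩ := mem_powersetCard.mp hT
      rw [← ih k (A \ T) (by rw [card_sdiff_of_subset hTA]; omega)]
      refine card_bij' (fun g _ => Function.update g a ∅)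
        (fun g' _ => Function.update g' a T) ?_ ?_ ?_ ?_
      · intro g hg
        rw [mem_filter, mem_chopSet] at hg
        obtain ⟨⟨h1, h2, h3, h4⟩, hgT⟩ := hg
        have hbne : ∀ b ∈ s', b ≠ a := fun b hb => by rintro rfl; exact ha hb
        rw [mem_chopSet]
        refine ⟨?_, ?_, ?_, ?_⟩
        · intro b hb
          rw [Function.update_of_ne (hbne b hb)]
          exact h1 b (mem_cons_of_mem hb)
        · intro b hb
          by_cases hba : b = a
          · subst hba; simp
          · rw [Function.update_of_ne hba]
            exact h2 b (by simp [mem_cons, hba, hb])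
        · intro b₁ hb₁ b₂ hb₂ hne
          rw [Function.update_of_ne (hbne b₁ hb₁), Function.update_of_ne (hbne b₂ hb₂)]
          exact h3 b₁ (mem_cons_of_mem hb₁) b₂ (mem_cons_of_mem hb₂) hne
        · ext v
          rw [mem_biUnion]
          constructor
          · rintro ⟨b, hb, hv⟩
            rw [Function.update_of_ne (hbne b hb)] at hv
            refine mem_sdiff.mpr ⟨h4 ▸ mem_biUnion.mpr ⟨b, mem_cons_of_mem hb, hv⟩, ?_⟩
            intro hvT
            rw [← hgT] at hvT
            exact disjoint_left.mp (h3 a (mem_cons_self a s') b (mem_cons_of_mem hb)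
              (fun h => ha (h ▸ hb))) hvT hv
          · intro hv
            obtain ⟨hvA, hvT⟩ := mem_sdiff.mp hv
            obtain ⟨b, hb, hvb⟩ := mem_biUnion.mp (h4 ▸ hvA)
            rcases mem_cons.mp hb with rfl | hb'
            · exact absurd (hgT ▸ hvb) hvT
            · exact ⟨b, hb', by rw [Function.update_of_ne (hbne b hb')]; exact hvb⟩
      · intro g' hg'
        rw [mem_chopSet] at hg'
        obtain ⟨h1, h2, h3, h4⟩ := hg'
        have hga : g' a = ∅ := h2 a ha
        rw [mem_filter, mem_chopSet]
        have hbne : ∀ b ∈ s', b ≠ a := fun b hb => by rintro rfl; exact ha hb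
        have hsub : ∀ b ∈ s', g' b ⊆ A \ T := fun b hb => h4 ▸ subset_biUnion_of_mem g' hb
        refine ⟨⟨?_, ?_, ?_, ?_⟩, by simp⟩
        · intro b hb
          rcases mem_cons.mp hb with rfl | hb'
          · simp [hTc]
          · rw [Function.update_of_ne (hbne b hb')]; exact h1 b hb'
        · intro b hb
          rw [mem_cons, not_or] at hb
          rw [Function.update_of_ne hb.1]
          exact h2 b hb.2
        · intro b₁ hb₁ b₂ hb₂ hne
          rcases mem_cons.mp hb₁ with rfl | hb₁' <;> rcases mem_cons.mp hb₂ with rfl | hb₂'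
          · exact absurd rfl hne
          · rw [Function.update_self, Function.update_of_ne (hbne b₂ hb₂')]
            exact disjoint_sdiff.mono_right (hsub b₂ hb₂')
          · rw [Function.update_self, Function.update_of_ne (hbne b₁ hb₁')]
            exact (disjoint_sdiff.mono_right (hsub b₁ hb₁')).symm
          · rw [Function.update_of_ne (hbne b₁ hb₁'), Function.update_of_ne (hbne b₂ hb₂')]
            exact h3 b₁ hb₁' b₂ hb₂' hne
        · rw [cons_eq_insert, biUnion_insert, Function.update_self]
          have : s'.biUnion (Function.update g' a T) = s'.biUnion g' := by
            apply biUnion_congr rfl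
            intro b hb
            rw [Function.update_of_ne (hbne b hb)]
          rw [this, h4, union_sdiff_of_subset hTA]
      · intro g hg
        rw [mem_filter] at hg
        funext b
        by_cases hba : b = a
        · subst hba; simp [hg.2]
        · simp [Function.update_of_ne hba]
      · intro g' hg'
        rw [mem_chopSet] at hg'
        funext b
        by_cases hba : b = a
        · subst hba; simp [hg'.2.1 b ha]
        · simp [Function.update_of_ne hba]
    rw [sum_congr rfl key, sum_const, card_powersetCard, smul_eq_mul,
      Nat.multinomial_cons, hA]

lemma card_funs [Fintype β] [Nonempty β] (k : β → ℕ) (hk : ∑ b, k b = Fintype.card α) :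
    (Finset.univ.filter fun f : α → β =>
      ∀ b, (Finset.univ.filter fun v => f v = b).card = k b).card
      = Nat.multinomial Finset.univ k := by
  classical
  rw [← chop_card Finset.univ k Finset.univ (by simpa using hk)]
  refine card_bij (fun f _ => fun b => Finset.univ.filter fun v => f v = b) ?_ ?_ ?_
  · intro f hf
    rw [mem_filter] at hf
    rw [mem_chopSet]
    refine ⟨fun b _ => hf.2 b, fun b hb => absurd (mem_univ b) hb, ?_, ?_⟩
    · intro b₁ _ b₂ _ hne
      exact Finset.disjoint_filter.mpr fun v _ h1 h2 => hne (h1 ▸ h2)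
    · ext v
      simp only [mem_biUnion, mem_filter, mem_univ, true_and, iff_true]
      exact ⟨f v, rfl⟩
  · intro f₁ h₁ f₂ h₂ he
    funext v
    have := congrFun he (f₁ v)
    have hv : v ∈ Finset.univ.filter fun w => f₂ w = f₁ v := by
      rw [← this]; simp
    exact ((mem_filter.mp hv).2).symm
  · intro g hg
    rw [mem_chopSet] at hg
    obtain ⟨h1, h2, h3, h4⟩ := hg
    have hex : ∀ v : α, ∃ b, v ∈ g b := by
      intro v
      have : v ∈ Finset.univ.biUnion g := h4 ▸ mem_univ v
      obtain ⟨b, _, hb⟩ := mem_biUnion.mp this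
      exact ⟨b, hb⟩
    set f : α → β := fun v => (hex v).choose with hf
    have hfib : ∀ b, (Finset.univ.filter fun v => f v = b) = g b := by
      intro b
      ext v
      simp only [mem_filter, mem_univ, true_and]
      constructor
      · rintro rfl
        exact (hex v).choose_spec
      · intro hv
        by_contra hne
        exact disjoint_left.mp (h3 _ (mem_univ _) _ (mem_univ _) hne) (hex v).choose_spec hv
    refine ⟨f, ?_, ?_⟩
    · rw [mem_filter]
      exact ⟨mem_univ f, fun b => by rw [hfib b]; exact h1 b (mem_univ b)⟩
    · funext b; exact hfib b

end Counting

/-- `phi n m i` is the coefficient of `x^(n-i)` in the expansion of the generating function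
`G^m_i(x) = (∑_{j=0}^{i-1} x^j / j!)^(m-1)`. -/
noncomputable def phi (n m i : ℕ) : ℝ :=
  (((∑ j ∈ Finset.range i, Polynomial.C ((1 : ℝ) / (Nat.factorial j)) * Polynomial.X ^ j)) ^ (m - 1)).coeff (n - i)

lemma phi_eq (n m' i : ℕ) :
    phi n (m' + 1) i = ∑ l ∈ (Finset.finsuppAntidiag (range m') (n - i)).filter
        (fun l => ∀ t ∈ range m', l t < i),
      ∏ t ∈ range m', (1 : ℝ) / ((l t).factorial : ℝ) := by
  have hp : ∀ d, (∑ j ∈ range i,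
      Polynomial.C ((1:ℝ)/(Nat.factorial j)) * Polynomial.X ^ j).coeff d
      = if d < i then (1:ℝ)/(d.factorial : ℝ) else 0 := by
    intro d
    rw [Polynomial.finset_sum_coeff]
    simp only [Polynomial.coeff_C_mul, Polynomial.coeff_X_pow, mul_ite, mul_one, mul_zero]
    rw [Finset.sum_ite_eq (range i) d (fun j => (1:ℝ)/(Nat.factorial j))]
    simp [mem_range]
  unfold phi
  rw [← Polynomial.coeff_coe, Polynomial.coe_pow, PowerSeries.coeff_pow]
  simp only [Nat.add_sub_cancel, Polynomial.coeff_coe, hp, Finset.prod_ite_zero]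
  rw [Finset.sum_filter]

set_option maxHeartbeats 1000000 in
/-- The number of voting profiles (functions from `n` voters to `m` classes) in which the
designated class `cstar` receives exactly `i` votes and every other class receives at most
`i - 1` votes equals `C(n,i) · φ_i · (n-i)!`. -/
theorem stmt0 (n m i : ℕ) (hn : 1 ≤ n) (hm : 2 ≤ m) (hi1 : 1 ≤ i) (hin : i ≤ n)
    (cstar : Fin m) :
    ((Finset.univ.filter (fun f : Fin n → Fin m =>
        (Finset.univ.filter (fun v : Fin n => f v = cstar)).card = i ∧
        ∀ c : Fin m, c ≠ cstar →
          (Finset.univ.filter (fun v : Fin n => f v = c)).card ≤ i - 1)).card : ℝ)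
      = (n.choose i : ℝ) * phi n m i * ((n - i).factorial : ℝ) := by
  obtain ⟨m', rfl⟩ : ∃ m', m = m' + 1 := ⟨m - 1, by omega⟩
  set cnt : (Fin n → Fin (m' + 1)) → (Fin (m' + 1) → ℕ) :=
    fun f c => (Finset.univ.filter fun v => f v = c).card with hcnt
  have hsumfib : ∀ f : Fin n → Fin (m' + 1), ∑ c, cnt f c = n := by
    intro f
    simpa using (card_eq_sum_card_fiberwise (fun v (_ : v ∈ Finset.univ) => mem_univ (f v))).symm
  set K : Finset (Fin (m' + 1) → ℕ) :=
    (Fintype.piFinset fun _ : Fin (m' + 1) => range (n + 1)).filter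
      (fun k => (∑ c, k c = n) ∧ k cstar = i ∧ ∀ c, c ≠ cstar → k c ≤ i - 1) with hK
  set S := (Finset.univ.filter (fun f : Fin n → Fin (m' + 1) =>
        (Finset.univ.filter (fun v : Fin n => f v = cstar)).card = i ∧
        ∀ c : Fin (m' + 1), c ≠ cstar →
          (Finset.univ.filter (fun v : Fin n => f v = c)).card ≤ i - 1)) with hSdef
  have hmemK : ∀ f ∈ S, cnt f ∈ K := by
    intro f hf
    rw [hSdef, mem_filter] at hf
    rw [hK, mem_filter, Fintype.mem_piFinset]
    refine ⟨fun c => ?_, hsumfib f, hf.2.1, hf.2.2⟩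
    rw [mem_range]
    calc cnt f c ≤ Finset.univ.card := card_filter_le _ _
    _ = n := by simp
    _ < n + 1 := Nat.lt_succ_self n
  have hS : S.card = ∑ k ∈ K, (Finset.univ.filter fun f => cnt f = k).card := by
    rw [card_eq_sum_card_fiberwise hmemK]
    apply sum_congr rfl
    intro k hk
    congr 1
    ext f
    rw [hK, mem_filter] at hk
    simp only [mem_filter, mem_univ, true_and, hSdef, and_iff_right_iff_imp]
    intro hfk
    have h1 : ∀ c, (Finset.univ.filter fun v => f v = c).card = k c :=
      fun c => congrFun hfk c
    refine ⟨(h1 cstar).trans hk.2.2.1, fun c hc => ?_⟩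
    rw [h1 c]
    exact hk.2.2.2 c hc
  have hterm : ∀ k ∈ K, (Finset.univ.filter fun f => cnt f = k).card
      = Nat.multinomial Finset.univ k := by
    intro k hk
    rw [hK, mem_filter] at hk
    have : (Finset.univ.filter fun f => cnt f = k)
        = (Finset.univ.filter fun f : Fin n → Fin (m' + 1) =>
            ∀ b, (Finset.univ.filter fun v => f v = b).card = k b) := by
      ext f; simp [funext_iff, hcnt]
    rw [this]
    have hcf := card_funs (α := Fin n) k (by simp only [Fintype.card_fin]; exact hk.2.1)
    convert hcf using 2
    exact congrArg (fun h => @Finset.filter _ _ h Finset.univ) (Subsingleton.elim _ _)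
  set AD := (Finset.finsuppAntidiag (range m') (n - i)).filter
      (fun l => ∀ t ∈ range m', l t < i) with hAD
  have hFsupp : ∀ (k : Fin (m' + 1) → ℕ) (t : ℕ),
      (if h : t < m' then k (cstar.succAbove ⟨t, h⟩) else 0) ≠ 0 → t ∈ range m' := by
    intro k t ht
    rw [mem_range]
    by_contra h
    simp [h] at ht
  set F : (Fin (m' + 1) → ℕ) → (ℕ →₀ ℕ) := fun k =>
    Finsupp.onFinset (range m') (fun t => if h : t < m' then k (cstar.succAbove ⟨t, h⟩) else 0)
      (hFsupp k) with hF
  set G : (ℕ →₀ ℕ) → (Fin (m' + 1) → ℕ) := fun l c =>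
    (finSuccEquiv' cstar c).elim i (fun t => l t.val) with hG
  have hGstar : ∀ l, G l cstar = i := by
    intro l; rw [hG]; simp [finSuccEquiv'_at]
  have hGsucc : ∀ l (t : Fin m'), G l (cstar.succAbove t) = l t.val := by
    intro l t; rw [hG]; simp [finSuccEquiv'_succAbove]
  have hFval : ∀ k (t : Fin m'), F k t.val = k (cstar.succAbove t) := by
    intro k t
    rw [hF]
    simp only [Finsupp.onFinset_apply]
    rw [dif_pos t.isLt]
  have hFsum : ∀ k : Fin (m' + 1) → ℕ,
      ∑ t ∈ range m', F k t = ∑ t : Fin m', k (cstar.succAbove t) := by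
    intro k
    rw [← Fin.sum_univ_eq_sum_range (fun t => F k t) m']
    exact sum_congr rfl (fun t _ => hFval k t)
  have hbij : ∑ k ∈ K, (Nat.multinomial Finset.univ k : ℝ)
      = ∑ l ∈ AD, (n.choose i : ℝ) *
          (∏ t ∈ range m', (1 : ℝ) / ((l t).factorial : ℝ)) * ((n - i).factorial : ℝ) := by
    refine Finset.sum_bij' (fun k _ => F k) (fun l _ => G l) ?_ ?_ ?_ ?_ ?_
    · -- F k ∈ AD
      intro k hk
      rw [hK, mem_filter] at hk
      obtain ⟨hpi, hsum, hstar, hbd⟩ := hk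
      rw [hAD, mem_filter, mem_finsuppAntidiag]
      have hdec : ∑ c, k c = k cstar + ∑ t : Fin m', k (cstar.succAbove t) :=
        Fin.sum_univ_succAbove k cstar
      refine ⟨⟨?_, Finsupp.support_onFinset_subset⟩, ?_⟩
      · rw [hFsum k]; omega
      · intro t ht
        rw [mem_range] at ht
        have h1 := hFval k ⟨t, ht⟩
        simp only at h1
        rw [h1]
        have h2 := hbd (cstar.succAbove ⟨t, ht⟩) (Fin.succAbove_ne cstar ⟨t, ht⟩)
        omega
    · -- G l ∈ K
      intro l hl
      rw [hAD, mem_filter, mem_finsuppAntidiag] at hl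
      obtain ⟨⟨hsum, hsupp⟩, hbd⟩ := hl
      have hsingle : ∀ t : Fin m', l t.val ≤ n - i := by
        intro t
        rw [← hsum]
        exact single_le_sum (fun _ _ => Nat.zero_le _) (mem_range.mpr t.isLt)
      have hsum' : ∑ c, G l c = n := by
        rw [Fin.sum_univ_succAbove (G l) cstar, hGstar]
        have h3 : ∑ t : Fin m', G l (cstar.succAbove t) = ∑ t : Fin m', l t.val :=
          sum_congr rfl (fun t _ => hGsucc l t)
        rw [h3, Fin.sum_univ_eq_sum_range (fun t => l t) m', hsum]
        omega
      rw [hK, mem_filter, Fintype.mem_piFinset]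
      refine ⟨fun c => ?_, hsum', hGstar l, fun c hc => ?_⟩
      · rw [mem_range]
        by_cases hc : c = cstar
        · subst hc; rw [hGstar]; omega
        · obtain ⟨t, rfl⟩ := Fin.exists_succAbove_eq hc
          rw [hGsucc]
          have := hsingle t
          omega
      · obtain ⟨t, rfl⟩ := Fin.exists_succAbove_eq hc
        rw [hGsucc]
        have := hbd t.val (mem_range.mpr t.isLt)
        omega
    · -- left inverse
      intro k hk
      funext c
      by_cases hc : c = cstar
      · subst hc
        rw [hK, mem_filter] at hk
        rw [hGstar]
        exact hk.2.2.1.symm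
      · obtain ⟨t, rfl⟩ := Fin.exists_succAbove_eq hc
        rw [hGsucc, hFval]
    · -- right inverse
      intro l hl
      rw [hAD, mem_filter, mem_finsuppAntidiag] at hl
      ext t
      by_cases ht : t < m'
      · have h1 := hFval (G l) ⟨t, ht⟩
        simp only at h1
        rw [h1, hGsucc]
      · have h0 : F (G l) t = 0 := by
          rw [hF]
          simp only [Finsupp.onFinset_apply]
          rw [dif_neg ht]
        rw [h0]
        by_contra hne
        exact ht (mem_range.mp (hl.1.2 (Finsupp.mem_support_iff.mpr (fun h => hne h.symm))))
    · -- values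
      intro k hk
      rw [hK, mem_filter] at hk
      obtain ⟨hpi, hsum, hstar, hbd⟩ := hk
      have hprod : ∏ t ∈ range m', (1:ℝ)/((F k t).factorial : ℝ)
          = ∏ t : Fin m', (1:ℝ)/((k (cstar.succAbove t)).factorial : ℝ) := by
        rw [← Fin.prod_univ_eq_prod_range (fun t => (1:ℝ)/((F k t).factorial:ℝ)) m']
        exact prod_congr rfl (fun t _ => by rw [hFval])
      set P : ℝ := ∏ t : Fin m', ((k (cstar.succAbove t)).factorial : ℝ) with hPdef
      have hPpos : 0 < P := prod_pos (fun _ _ => by positivity)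
      have hspec := Nat.multinomial_spec Finset.univ k
      have hps : ∏ c, (k c).factorial
          = (k cstar).factorial * ∏ t : Fin m', (k (cstar.succAbove t)).factorial :=
        Fin.prod_univ_succAbove (fun c => (k c).factorial) cstar
      rw [hps, hstar, hsum] at hspec
      have hcast : ((i.factorial : ℝ) * P) * (Nat.multinomial Finset.univ k : ℝ)
          = (n.factorial : ℝ) := by
        rw [hPdef]; exact_mod_cast hspec
      have hchoose : (n.choose i : ℝ) * (i.factorial : ℝ) * ((n-i).factorial : ℝ)
          = (n.factorial : ℝ) := by
        exact_mod_cast Nat.choose_mul_factorial_mul_factorial hin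
      rw [hprod]
      have hinv : ∏ t : Fin m', (1:ℝ)/((k (cstar.succAbove t)).factorial : ℝ) = 1/P := by
        rw [hPdef]
        simp only [one_div]
        rw [← prod_inv_distrib]
      rw [hinv]
      have hifac : (0:ℝ) < (i.factorial : ℝ) := by positivity
      have hM : (Nat.multinomial Finset.univ k : ℝ)
          = (n.factorial : ℝ) / ((i.factorial : ℝ) * P) := by
        field_simp
        linear_combination hcast
      rw [hM, ← hchoose]
      field_simp
  have hSR : (S.card : ℝ) = ∑ k ∈ K, (Nat.multinomial Finset.univ k : ℝ) := by
    rw [hS]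
    push_cast
    exact sum_congr rfl (fun k hk => by exact_mod_cast congrArg Nat.cast (hterm k hk))
  rw [hSR, hbij, phi_eq, mul_sum, sum_mul]
end

section
/- Fix integers n ≥ 1, m ≥ 2 and a real number p ∈ [0,1]. Suppose n classifiers vote independently, each voting for the designated correct class c* with probability p/D and for each of the other m−1 classes with probability (1−p)/D, where D = p + (m−1)(1−p). Then the probability that c* receives strictly more votes than every other class (i.e., c* is the unique Plurality winner) equals T(p) = (1/K) Σ_{i=⌈n/m⌉}^{n} φ_i · (n−i)! · C(n,i) · p^i · (1−p)^{n−i}, where φ_i is the coefficient of x^{n−i} in the expansion of G^m_i(x) = (Σ_{j=0}^{i−1} x^j / j!)^{m−1} and K = Σ_{j=0}^{n} C(n,j) · p^j · (m−1)^{n−j} · (1−p)^{n−j}. -/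
open Finset

/-- The normalization constant `K = ∑_{j=0}^n C(n,j) p^j (m-1)^(n-j) (1-p)^(n-j)`. -/
noncomputable def Knorm (n m : ℕ) (p : ℝ) : ℝ :=
  ∑ j ∈ Finset.range (n + 1),
    (n.choose j : ℝ) * p ^ j * ((m : ℝ) - 1) ^ (n - j) * (1 - p) ^ (n - j)

/-- `T(p) = (1/K) ∑_{i=⌈n/m⌉}^n φ_i (n-i)! C(n,i) p^i (1-p)^(n-i)`. -/
noncomputable def Tprob (n m : ℕ) (p : ℝ) : ℝ :=
  (1 / Knorm n m p) *
    ∑ i ∈ Finset.Icc (⌈(n : ℚ) / (m : ℚ)⌉₊) n,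
      phi n m i * ((n - i).factorial : ℝ) * (n.choose i : ℝ) * p ^ i * (1 - p) ^ (n - i)

/-- The set of voting profiles in which `cstar` receives strictly more votes than every other
class, i.e. `cstar` is the unique Plurality winner. -/
def wins (n m : ℕ) (cstar : Fin m) : Finset (Fin n → Fin m) :=
  Finset.univ.filter (fun f => ∀ c : Fin m, c ≠ cstar →
    (Finset.univ.filter (fun v : Fin n => f v = c)).card <
      (Finset.univ.filter (fun v : Fin n => f v = cstar)).card)

noncomputable def Pb (i : ℕ) : Polynomial ℝ :=
  ∑ j ∈ Finset.range i, Polynomial.C ((1 : ℝ) / (Nat.factorial j)) * Polynomial.X ^ j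

lemma phi_eq_s1 (n m i : ℕ) : phi n m i = ((Pb i) ^ (m - 1)).coeff (n - i) := rfl

lemma Pb_coeff (i a : ℕ) :
    (Pb i).coeff a = if a < i then (1 : ℝ) / (Nat.factorial a) else 0 := by
  rw [Pb, Polynomial.finset_sum_coeff]
  simp only [Polynomial.coeff_C_mul, Polynomial.coeff_X_pow, mul_ite, mul_one, mul_zero]
  rw [Finset.sum_ite_eq (Finset.range i) a (fun j => (1:ℝ)/(j.factorial))]
  simp [Finset.mem_range]

lemma Pb_natDegree_le (i : ℕ) : (Pb i).natDegree ≤ i - 1 := by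
  apply Polynomial.natDegree_sum_le_of_forall_le
  intro j hj
  refine le_trans (Polynomial.natDegree_mul_le) ?_
  simp only [Polynomial.natDegree_C, Polynomial.natDegree_X_pow, zero_add]
  have := Finset.mem_range.mp hj
  omega

section
variable {V C : Type} [Fintype V] [DecidableEq V] [Fintype C] [DecidableEq C]

lemma subCount (s : Finset V) (P : V → Prop) [DecidablePred P] :
    (univ.filter (fun v : {v : V // v ∉ s} => P v.1)).card
      = (univ.filter (fun v : V => v ∉ s ∧ P v)).card := by
  rw [← Fintype.card_subtype, ← Fintype.card_subtype]
  exact Fintype.card_congr (Equiv.subtypeSubtypeEquivSubtypeInter _ _)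

lemma codT {C' : Type} [Fintype C'] [DecidableEq C'] (e : C ≃ C') (i : ℕ) :
    (univ.filter (fun g : V → C =>
        ∀ t : C, (univ.filter (fun v => g v = t)).card < i)).card
      = (univ.filter (fun g : V → C' =>
        ∀ t : C', (univ.filter (fun v => g v = t)).card < i)).card := by
  rw [← Fintype.card_subtype, ← Fintype.card_subtype]
  apply Fintype.card_congr
  refine Equiv.subtypeEquiv (Equiv.arrowCongr (Equiv.refl V) e) ?_
  intro g
  constructor
  · intro h t'
    have h1 : (univ.filter (fun v : V => (Equiv.arrowCongr (Equiv.refl V) e) g v = t'))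
        = univ.filter (fun v : V => g v = e.symm t') := by
      apply Finset.filter_congr; intro v _
      simp [Equiv.arrowCongr, Equiv.eq_symm_apply]
    rw [h1]; exact h _
  · intro h t
    have h1 : (univ.filter (fun v : V => g v = t))
        = univ.filter (fun v : V => (Equiv.arrowCongr (Equiv.refl V) e) g v = e t) := by
      apply Finset.filter_congr; intro v _
      simp [Equiv.arrowCongr]
    rw [h1]; exact h _

variable (c0 : C) (s : Finset V)

def Fmap (f : V → C) (hf : univ.filter (fun v => f v = c0) = s) :
    {v : V // v ∉ s} → {c : C // c ≠ c0} :=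
  fun v => ⟨f v.1, fun hc =>
    v.2 ((Finset.ext_iff.mp hf v.1).mp (mem_filter.mpr ⟨mem_univ _, hc⟩))⟩

def Gmap (h : {v : V // v ∉ s} → {c : C // c ≠ c0}) : V → C :=
  fun v => if hv : v ∈ s then c0 else (h ⟨v, hv⟩).1

lemma Gmap_fiber (h : {v : V // v ∉ s} → {c : C // c ≠ c0}) :
    univ.filter (fun v => Gmap c0 s h v = c0) = s := by
  ext v
  simp only [mem_filter, mem_univ, true_and, Gmap]
  by_cases hv : v ∈ s
  · simp [hv]
  · simp [hv, (h ⟨v, hv⟩).2]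

lemma Fmap_fiber (f : V → C) (hf : univ.filter (fun v => f v = c0) = s)
    (t : {c : C // c ≠ c0}) :
    (univ.filter (fun v => Fmap c0 s f hf v = t)).card
      = (univ.filter (fun v : V => f v = t.1)).card := by
  have h1 : (univ.filter (fun v => Fmap c0 s f hf v = t))
      = univ.filter (fun v : {v : V // v ∉ s} => f v.1 = t.1) := by
    apply filter_congr; intro v _; simp [Fmap, Subtype.ext_iff]
  rw [h1, subCount s (fun v => f v = t.1)]
  congr 1
  ext v
  simp only [mem_filter, mem_univ, true_and, and_iff_right_iff_imp]
  intro hfv hv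
  have : v ∈ univ.filter (fun v => f v = c0) := (Finset.ext_iff.mp hf v).mpr hv
  exact t.2 (hfv ▸ (mem_filter.mp this).2)

lemma Gmap_fiber_ne (h : {v : V // v ∉ s} → {c : C // c ≠ c0}) (c : C) (hc : c ≠ c0) :
    (univ.filter (fun v => Gmap c0 s h v = c)).card
      = (univ.filter (fun w : {v : V // v ∉ s} => h w = ⟨c, hc⟩)).card := by
  have h1 : univ.filter (fun v => Gmap c0 s h v = c)
      = univ.filter (fun v => v ∉ s ∧ Gmap c0 s h v = c) := by
    ext v
    simp only [mem_filter, mem_univ, true_and]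
    refine ⟨fun hg => ⟨fun hv => ?_, hg⟩, fun hh => hh.2⟩
    simp only [Gmap, dif_pos hv] at hg
    exact hc hg.symm
  rw [h1, ← subCount s (fun v => Gmap c0 s h v = c)]
  congr 1
  apply filter_congr
  intro w _
  simp [Gmap, dif_neg w.2, Subtype.ext_iff]

lemma decomp (i : ℕ) :
    (univ.filter (fun f : V → C =>
        univ.filter (fun v => f v = c0) = s ∧
        ∀ c, c ≠ c0 → (univ.filter (fun v => f v = c)).card < i)).card
      = (univ.filter (fun h : {v : V // v ∉ s} → {c : C // c ≠ c0} =>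
        ∀ t, (univ.filter (fun v => h v = t)).card < i)).card := by
  rw [← Fintype.card_subtype, ← Fintype.card_subtype]
  apply Fintype.card_congr
  refine
    { toFun := fun fp => ⟨Fmap c0 s fp.1 fp.2.1, fun t => by
        rw [Fmap_fiber]; exact fp.2.2 t.1 t.2⟩
      invFun := fun hp => ⟨Gmap c0 s hp.1, Gmap_fiber c0 s hp.1, fun c hc => by
        rw [Gmap_fiber_ne c0 s hp.1 c hc]; exact hp.2 _⟩
      left_inv := ?_
      right_inv := ?_ }
  · intro fp
    apply Subtype.ext
    funext v
    by_cases hv : v ∈ s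
    · show Gmap c0 s _ v = fp.1 v
      simp only [Gmap, dif_pos hv]
      have : v ∈ univ.filter (fun v => fp.1 v = c0) := (Finset.ext_iff.mp fp.2.1 v).mpr hv
      exact ((mem_filter.mp this).2).symm
    · show Gmap c0 s _ v = fp.1 v
      simp only [Gmap, dif_neg hv]
      rfl
  · intro hp
    apply Subtype.ext
    funext w
    apply Subtype.ext
    show Gmap c0 s hp.1 w.1 = _
    simp only [Gmap, dif_neg w.2]

end

lemma card_compl_sub {V : Type} [Fintype V] [DecidableEq V] (s : Finset V) :
    Fintype.card {v : V // v ∉ s} = Fintype.card V - s.card := by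
  simp [Fintype.card_subtype_compl, Fintype.card_coe]

lemma cnt (r : ℕ) : ∀ (V : Type) [Fintype V] [DecidableEq V] (i : ℕ),
    (((univ.filter (fun g : V → Fin r =>
        ∀ t : Fin r, (univ.filter (fun v => g v = t)).card < i)).card : ℝ))
      = ((Fintype.card V).factorial : ℝ) * ((Pb i) ^ r).coeff (Fintype.card V) := by
  induction r with
  | zero =>
    intro V _ _ i
    have h1 : (univ.filter (fun g : V → Fin 0 =>
        ∀ t : Fin 0, (univ.filter (fun v => g v = t)).card < i)) = univ :=
      filter_true_of_mem (fun g _ t => t.elim0)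
    rw [h1, card_univ, Fintype.card_fun]
    rcases Nat.eq_zero_or_pos (Fintype.card V) with h | h
    · simp [h]
    · rw [Fintype.card_fin, zero_pow (Nat.pos_iff_ne_zero.mp h)]
      simp [Polynomial.coeff_one, Nat.pos_iff_ne_zero.mp h, (Nat.pos_iff_ne_zero.mp h : _ ≠ 0).symm]
  | succ r IH =>
    intro V _ _ i
    set k := Fintype.card V with hk
    have e0 : {c : Fin (r+1) // c ≠ 0} ≃ Fin r :=
      { toFun := fun c => c.1.pred c.2
        invFun := fun t => ⟨t.succ, Fin.succ_ne_zero t⟩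
        left_inv := fun c => Subtype.ext (Fin.succ_pred c.1 c.2)
        right_inv := fun t => Fin.pred_succ t }
    have hfib : (univ.filter (fun g : V → Fin (r+1) =>
        ∀ t, (univ.filter (fun v => g v = t)).card < i)).card
        = ∑ s ∈ (univ : Finset (Finset V)),
            ((univ.filter (fun g : V → Fin (r+1) =>
              ∀ t, (univ.filter (fun v => g v = t)).card < i)).filter
                (fun g => univ.filter (fun v => g v = 0) = s)).card :=
      card_eq_sum_card_fiberwise (fun g _ => mem_univ _)
    have key : ∀ s : Finset V,
        ((((univ.filter (fun g : V → Fin (r+1) =>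
              ∀ t, (univ.filter (fun v => g v = t)).card < i)).filter
                (fun g => univ.filter (fun v => g v = 0) = s)).card : ℝ))
          = if s.card < i
            then ((k - s.card).factorial : ℝ) * ((Pb i) ^ r).coeff (k - s.card)
            else 0 := by
      intro s
      by_cases hsi : s.card < i
      · rw [if_pos hsi]
        have h2 : (univ.filter (fun g : V → Fin (r+1) =>
              ∀ t, (univ.filter (fun v => g v = t)).card < i)).filter
                (fun g => univ.filter (fun v => g v = 0) = s)
            = univ.filter (fun g : V → Fin (r+1) =>
                univ.filter (fun v => g v = 0) = s ∧
                ∀ c, c ≠ 0 → (univ.filter (fun v => g v = c)).card < i) := by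
          rw [filter_filter]
          apply filter_congr
          intro g _
          constructor
          · rintro ⟨hall, hfib0⟩
            exact ⟨hfib0, fun c _ => hall c⟩
          · rintro ⟨hfib0, hne⟩
            refine ⟨fun t => ?_, hfib0⟩
            by_cases ht : t = 0
            · subst ht; rw [hfib0]; exact hsi
            · exact hne t ht
        rw [h2]
        have hd := decomp (0 : Fin (r+1)) s i
        rw [codT e0 i] at hd
        have hi := IH {v : V // v ∉ s} i
        rw [card_compl_sub s] at hi
        rw [← hi, Nat.cast_inj]
        convert hd using 3
      · rw [if_neg hsi]
        have h3 : (univ.filter (fun g : V → Fin (r+1) =>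
              ∀ t, (univ.filter (fun v => g v = t)).card < i)).filter
                (fun g => univ.filter (fun v => g v = 0) = s) = ∅ := by
          rw [eq_empty_iff_forall_notMem]
          intro g hg
          rw [mem_filter, mem_filter] at hg
          obtain ⟨⟨-, hall⟩, hfib0⟩ := hg
          exact hsi (hfib0 ▸ hall 0)
        rw [h3]
        simp
    rw [hfib]
    push_cast
    rw [Finset.sum_congr rfl (fun s _ => key s)]
    rw [← Finset.powerset_univ,
      Finset.sum_powerset_apply_card
        (fun j => if j < i then ((k - j).factorial : ℝ) * ((Pb i) ^ r).coeff (k - j) else 0)]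
    have hRHS : ((Pb i) ^ (r+1)).coeff k
        = ∑ j ∈ Finset.range (k+1), (Pb i).coeff j * ((Pb i) ^ r).coeff (k - j) := by
      rw [pow_succ', Polynomial.coeff_mul]
      exact Finset.Nat.sum_antidiagonal_eq_sum_range_succ_mk _ k
    rw [hRHS, Finset.mul_sum, card_univ, ← hk]
    apply Finset.sum_congr rfl
    intro j hj
    have hjk : j ≤ k := Nat.lt_succ_iff.mp (Finset.mem_range.mp hj)
    rw [Pb_coeff, nsmul_eq_mul]
    by_cases hji : j < i
    · rw [if_pos hji, if_pos hji]
      have hnat : (k.choose j) * j.factorial * (k - j).factorial = k.factorial :=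
        Nat.choose_mul_factorial_mul_factorial hjk
      have hreal : (k.choose j : ℝ) * (j.factorial : ℝ) * ((k - j).factorial : ℝ)
          = (k.factorial : ℝ) := by exact_mod_cast hnat
      have hfj : (j.factorial : ℝ) ≠ 0 := Nat.cast_ne_zero.mpr (Nat.factorial_ne_zero j)
      field_simp [← hreal]
      rw [← hreal]; ring
    · rw [if_neg hji, if_neg hji]
      simp

lemma Knorm_eq (n m : ℕ) (p : ℝ) : Knorm n m p = (p + ((m : ℝ) - 1) * (1 - p)) ^ n := by
  rw [add_pow, Knorm]
  apply Finset.sum_congr rfl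
  intro j hj
  rw [mul_pow]
  ring

lemma phi_vanish (n m i : ℕ) (hn : 1 ≤ n) (hm : 2 ≤ m) (hi : i < ⌈(n : ℚ) / (m : ℚ)⌉₊) :
    phi n m i = 0 := by
  have hmQ : (0:ℚ) < (m:ℚ) := by
    have : 0 < m := by omega
    exact_mod_cast this
  have h1 : (i:ℚ) < (n:ℚ) / (m:ℚ) := Nat.lt_ceil.mp hi
  have h2 : i * m < n := by
    have := (lt_div_iff₀ hmQ).mp h1
    exact_mod_cast this
  have hdeg : ((Pb i) ^ (m-1)).natDegree < n - i := by
    have hle : ((Pb i) ^ (m-1)).natDegree ≤ (m-1) * (i-1) :=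
      le_trans (Polynomial.natDegree_pow_le)
        (Nat.mul_le_mul_left _ (Pb_natDegree_le i))
    refine lt_of_le_of_lt hle ?_
    rcases Nat.eq_zero_or_pos i with hi0 | hip
    · subst hi0; simpa using (Nat.pos_of_ne_zero (by omega) : 0 < n)
    · obtain ⟨i', rfl⟩ : ∃ i', i = i' + 1 := ⟨i - 1, by omega⟩
      obtain ⟨m', rfl⟩ : ∃ m', m = m' + 2 := ⟨m - 2, by omega⟩
      have e1 : (i' + 1) * (m' + 2) = i' * m' + 2 * i' + m' + 2 := by ring
      have e2 : (m' + 2 - 1) * (i' + 1 - 1) = i' * m' + i' := by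
        show (m' + 1) * i' = i' * m' + i'
        ring
      rw [e2]
      rw [e1] at h2
      omega
  rw [phi_eq_s1]
  exact Polynomial.coeff_eq_zero_of_natDegree_lt hdeg

/-- If `n` classifiers vote independently, each voting for the correct class `cstar` with
probability `p/D` and for each of the other `m-1` classes with probability `(1-p)/D`, where
`D = p + (m-1)(1-p)`, then the probability that `cstar` is the unique Plurality winner
equals `T(p)`. -/
theorem stmt1 (n m : ℕ) (hn : 1 ≤ n) (hm : 2 ≤ m) (p : ℝ) (hp0 : 0 ≤ p) (hp1 : p ≤ 1)
    (cstar : Fin m) (D : ℝ) (hD : D = p + ((m : ℝ) - 1) * (1 - p)) :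
    (∑ f ∈ wins n m cstar,
        ∏ v : Fin n, (if f v = cstar then p / D else (1 - p) / D)) = Tprob n m p := by
  have hm1 : (1:ℝ) ≤ (m:ℝ) - 1 := by
    have : (2:ℝ) ≤ (m:ℝ) := by exact_mod_cast hm
    linarith
  have hD1 : (1:ℝ) ≤ D := by rw [hD]; nlinarith
  have hDne : D ≠ 0 := by positivity
  have hDn : D ^ n ≠ 0 := pow_ne_zero _ hDne
  -- the codomain equivalence
  have ecard : Fintype.card {c : Fin m // c ≠ cstar} = m - 1 := by
    simp [Fintype.card_subtype_compl, Fintype.card_subtype_eq]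
  let e : {c : Fin m // c ≠ cstar} ≃ Fin (m-1) := Fintype.equivFinOfCardEq ecard
  -- counting lemma
  have hN : ∀ i, i ≤ n →
      ((((wins n m cstar).filter
          (fun f => (univ.filter (fun v => f v = cstar)).card = i)).card : ℝ))
        = (n.choose i : ℝ) * (((n - i).factorial : ℝ) * phi n m i) := by
    intro i hi'
    have h1 : ((wins n m cstar).filter
          (fun f => (univ.filter (fun v => f v = cstar)).card = i)).card
        = ∑ S ∈ powersetCard i (univ : Finset (Fin n)),
            (((wins n m cstar).filter
              (fun f => (univ.filter (fun v => f v = cstar)).card = i)).filter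
                (fun f => univ.filter (fun v => f v = cstar) = S)).card :=
      card_eq_sum_card_fiberwise (fun f hf =>
        mem_powersetCard_univ.mpr (mem_filter.mp hf).2)
    have h2 : ∀ S ∈ powersetCard i (univ : Finset (Fin n)),
        ((((wins n m cstar).filter
            (fun f => (univ.filter (fun v => f v = cstar)).card = i)).filter
              (fun f => univ.filter (fun v => f v = cstar) = S)).card : ℝ)
          = ((n - i).factorial : ℝ) * phi n m i := by
      intro S hS
      have hScard : S.card = i := mem_powersetCard_univ.mp hS
      have heq : ((wins n m cstar).filter
            (fun f => (univ.filter (fun v => f v = cstar)).card = i)).filter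
              (fun f => univ.filter (fun v => f v = cstar) = S)
          = univ.filter (fun f : Fin n → Fin m =>
              univ.filter (fun v => f v = cstar) = S ∧
              ∀ c, c ≠ cstar → (univ.filter (fun v => f v = c)).card < i) := by
        rw [wins, filter_filter, filter_filter]
        apply filter_congr
        intro f _
        constructor
        · rintro ⟨hw, ha, hfib⟩
          exact ⟨hfib, fun c hc => ha ▸ hw c hc⟩
        · rintro ⟨hfib, hlt⟩
          have ha : (univ.filter (fun v => f v = cstar)).card = i := by
            rw [hfib, hScard]
          exact ⟨fun c hc => ha.symm ▸ hlt c hc, ha, hfib⟩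
      rw [heq]
      have hd := decomp cstar S i
      rw [codT e i] at hd
      have hc := cnt (m-1) {v : Fin n // v ∉ S} i
      rw [card_compl_sub S, Fintype.card_fin, hScard] at hc
      rw [phi_eq_s1]
      rw [← hc, Nat.cast_inj]
      convert hd using 3
    rw [h1]
    push_cast
    rw [Finset.sum_congr rfl h2, Finset.sum_const, card_powersetCard, card_univ,
      Fintype.card_fin, nsmul_eq_mul]
  -- product weight formula
  have hprod : ∀ f : Fin n → Fin m,
      (∏ v : Fin n, (if f v = cstar then p / D else (1 - p) / D))
        = (p/D) ^ ((univ.filter (fun v => f v = cstar)).card)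
          * ((1-p)/D) ^ (n - (univ.filter (fun v => f v = cstar)).card) := by
    intro f
    rw [Finset.prod_ite (fun _ => p / D) (fun _ => (1-p)/D), prod_const, prod_const]
    congr 2
    have := Finset.card_filter_add_card_filter_not
      (s := (univ : Finset (Fin n))) (p := fun v => f v = cstar)
    rw [card_univ, Fintype.card_fin] at this
    omega
  rw [Finset.sum_congr rfl (fun f _ => hprod f)]
  have hmaps : ∀ f ∈ wins n m cstar,
      (univ.filter (fun v => f v = cstar)).card ∈ Finset.range (n+1) := by
    intro f _
    rw [Finset.mem_range, Nat.lt_succ_iff]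
    calc (univ.filter (fun v => f v = cstar)).card ≤ (univ : Finset (Fin n)).card :=
          card_filter_le _ _
      _ = n := by rw [card_univ, Fintype.card_fin]
  rw [← Finset.sum_fiberwise_of_maps_to hmaps]
  have hinner : ∀ i ∈ Finset.range (n+1),
      (∑ f ∈ (wins n m cstar).filter
          (fun f => (univ.filter (fun v => f v = cstar)).card = i),
        (p/D) ^ ((univ.filter (fun v => f v = cstar)).card)
          * ((1-p)/D) ^ (n - (univ.filter (fun v => f v = cstar)).card))
        = (1 / D^n) * (phi n m i * ((n - i).factorial : ℝ) * (n.choose i : ℝ)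
            * p ^ i * (1 - p) ^ (n - i)) := by
    intro i hi
    have hi' : i ≤ n := Nat.lt_succ_iff.mp (Finset.mem_range.mp hi)
    rw [Finset.sum_congr rfl (fun f hf => by
      rw [(mem_filter.mp hf).2])]
    rw [Finset.sum_const, nsmul_eq_mul, hN i hi']
    rw [div_pow, div_pow]
    have hpow : D ^ i * D ^ (n - i) = D ^ n := by
      rw [← pow_add, Nat.add_sub_cancel' hi']
    field_simp
    rw [← hpow]
    ring
  rw [Finset.sum_congr rfl hinner, ← Finset.mul_sum]
  rw [Tprob, Knorm_eq, ← hD]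
  congr 1
  symm
  apply Finset.sum_subset
  · intro i hi
    rw [Finset.mem_range, Nat.lt_succ_iff]
    exact (Finset.mem_Icc.mp hi).2
  · intro i hi hni
    have hi' : i ≤ n := Nat.lt_succ_iff.mp (Finset.mem_range.mp hi)
    have hlt : i < ⌈(n : ℚ) / (m : ℚ)⌉₊ := by
      by_contra hge
      exact hni (Finset.mem_Icc.mpr ⟨Nat.le_of_not_lt hge, hi'⟩)
    rw [phi_vanish n m i hn hm hlt]
    ring
end

section
/- For every integer n ≥ 1, the polynomial function T_n(p) = Σ_{i=⌈n/2⌉}^{n} C(n,i) p^i (1−p)^{n−i} has derivative with respect to p equal to ⌈n/2⌉ · C(n, ⌈n/2⌉) · p^{⌈n/2⌉ − 1} · (1−p)^{n − ⌈n/2⌉} at every real p. -/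
open Finset

/-- `T_n(p) = ∑_{i=⌈n/2⌉}^n C(n,i) p^i (1-p)^(n-i)`. -/
noncomputable def Tn (n : ℕ) (p : ℝ) : ℝ :=
  ∑ i ∈ Finset.Icc (⌈(n : ℚ) / 2⌉₊) n, (n.choose i : ℝ) * p ^ i * (1 - p) ^ (n - i)

/-- For every `n ≥ 1`, the derivative of `T_n` with respect to `p` equals
`⌈n/2⌉ · C(n,⌈n/2⌉) · p^(⌈n/2⌉-1) · (1-p)^(n-⌈n/2⌉)` at every real `p`. -/
theorem stmt7 (n : ℕ) (hn : 1 ≤ n) (p : ℝ) :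
    HasDerivAt (fun q : ℝ => Tn n q)
      ((⌈(n : ℚ) / 2⌉₊ : ℝ) * (n.choose ⌈(n : ℚ) / 2⌉₊ : ℝ)
        * p ^ (⌈(n : ℚ) / 2⌉₊ - 1) * (1 - p) ^ (n - ⌈(n : ℚ) / 2⌉₊)) p := by
  set k := ⌈(n : ℚ) / 2⌉₊ with hk
  have hkn : k ≤ n := by
    rw [hk]
    exact Nat.ceil_le.mpr (by
      rw [div_le_iff₀ (by norm_num)]
      have : (1:ℚ) ≤ n := by exact_mod_cast hn
      nlinarith)
  -- f i = i * C(n,i) * p^(i-1) * (1-p)^(n-i)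
  set f : ℕ → ℝ := fun i =>
    (i : ℝ) * (n.choose i : ℝ) * p ^ (i - 1) * (1 - p) ^ (n - i) with hf
  -- each term's derivative
  have hterm : ∀ i ∈ Finset.Icc k n,
      HasDerivAt (fun q : ℝ => (n.choose i : ℝ) * q ^ i * (1 - q) ^ (n - i))
        (f i - f (i + 1)) p := by
    intro i hi
    simp only [Finset.mem_Icc] at hi
    have h1 : HasDerivAt (fun q : ℝ => q ^ i) ((i : ℝ) * p ^ (i - 1)) p :=
      hasDerivAt_pow i p
    have h2 : HasDerivAt (fun q : ℝ => (1 - q) ^ (n - i))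
        (((n - i : ℕ) : ℝ) * (1 - p) ^ (n - i - 1) * (-1)) p :=
      (hasDerivAt_pow (n - i) (1 - p)).comp p ((hasDerivAt_id p).const_sub 1)
    have h3 := (h1.mul h2).const_mul ((n.choose i : ℝ))
    convert h3 using 1
    · rfl
    · rfl
    · ext q; simp only [Pi.mul_apply]; ring
    · have hch : ((n.choose (i + 1) : ℝ)) * ((i : ℝ) + 1) =
          (n.choose i : ℝ) * ((n - i : ℕ) : ℝ) := by
        exact_mod_cast congrArg (Nat.cast (R := ℝ)) (Nat.choose_succ_right_eq n i)
      simp only [f]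
      have hsub : (i + 1) - 1 = i := rfl
      have hsub2 : n - (i + 1) = n - i - 1 := rfl
      rw [hsub, hsub2]
      push_cast
      linear_combination (-(p ^ i) * (1 - p) ^ (n - i - 1)) * hch
  have hsum : HasDerivAt (fun q : ℝ => Tn n q)
      (∑ i ∈ Finset.Icc k n, (f i - f (i + 1))) p := by
    have := HasDerivAt.fun_sum hterm
    simpa [Tn, ← hk] using this
  have htel : ∑ i ∈ Finset.Icc k n, (f i - f (i + 1)) = f k - f (n + 1) := by
    rw [← Finset.Ico_add_one_right_eq_Icc, Finset.sum_Ico_eq_sum_range]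
    have h0 : n + 1 - k ≠ 0 := by omega
    calc ∑ j ∈ Finset.range (n + 1 - k), (f (k + j) - f (k + j + 1))
        = ∑ j ∈ Finset.range (n + 1 - k),
            ((fun j => f (k + j)) j - (fun j => f (k + j)) (j + 1)) := by
          apply Finset.sum_congr rfl; intro j _; rfl
      _ = f (k + 0) - f (k + (n + 1 - k)) := Finset.sum_range_sub' (fun j => f (k + j)) _
      _ = f k - f (n + 1) := by rw [Nat.add_zero, Nat.add_sub_cancel' (by omega)]
  have hfn1 : f (n + 1) = 0 := by
    simp [hf, Nat.choose_succ_self]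
  rw [htel, hfn1, sub_zero] at hsum
  simpa [hf] using hsum
end

section
/- For every real p ∈ [0,1] with p ≠ 1/2, the limit as n → ∞ of the derivative of T_n at p, namely lim_{n→∞} ⌈n/2⌉ · C(n, ⌈n/2⌉) · p^{⌈n/2⌉ − 1} · (1−p)^{n − ⌈n/2⌉}, equals 0. -/
open Filter

private lemma aux_choose_le_two_pow (n k : ℕ) : n.choose k ≤ 2 ^ n := by
  rcases le_or_gt k n with h | h
  · calc n.choose k ≤ ∑ i ∈ Finset.range (n + 1), n.choose i :=
        Finset.single_le_sum (fun _ _ => Nat.zero_le _) (Finset.mem_range.mpr (by omega))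
      _ = 2 ^ n := Nat.sum_range_choose n
  · simp [Nat.choose_eq_zero_of_lt h]

private lemma aux_ceil_half (n : ℕ) :
    n ≤ 2 * ⌈(n : ℚ) / 2⌉₊ ∧ 2 * ⌈(n : ℚ) / 2⌉₊ ≤ n + 1 := by
  constructor
  · have h := Nat.le_ceil ((n : ℚ) / 2)
    have : (n : ℚ) ≤ 2 * ⌈(n : ℚ) / 2⌉₊ := by linarith
    exact_mod_cast this
  · have h := Nat.ceil_lt_add_one (by positivity : (0 : ℚ) ≤ (n : ℚ) / 2)
    have h2 : (2 * ⌈(n : ℚ) / 2⌉₊ : ℚ) < (n : ℚ) + 2 := by linarith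
    have h3 : 2 * ⌈(n : ℚ) / 2⌉₊ < n + 2 := by exact_mod_cast h2
    omega

/-- For every `p ∈ [0,1]` with `p ≠ 1/2`, the derivative of `T_n` at `p`, namely
`⌈n/2⌉ · C(n,⌈n/2⌉) · p^(⌈n/2⌉-1) · (1-p)^(n-⌈n/2⌉)`, tends to `0` as `n → ∞`. -/
theorem stmt11 (p : ℝ) (hp0 : 0 ≤ p) (hp1 : p ≤ 1) (hp : p ≠ 1 / 2) :
    Tendsto (fun n : ℕ =>
        (⌈(n : ℚ) / 2⌉₊ : ℝ) * (n.choose ⌈(n : ℚ) / 2⌉₊ : ℝ)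
          * p ^ (⌈(n : ℚ) / 2⌉₊ - 1) * (1 - p) ^ (n - ⌈(n : ℚ) / 2⌉₊))
      atTop (nhds 0) := by
  rcases eq_or_lt_of_le hp0 with h0 | h0
  · -- p = 0 : the term is eventually 0
    apply Tendsto.congr' _
      (tendsto_const_nhds : Tendsto (fun _ : ℕ => (0:ℝ)) atTop (nhds 0))
    filter_upwards [eventually_ge_atTop 3] with n hn
    obtain ⟨hk1, hk2⟩ := aux_ceil_half n
    have hk : 2 ≤ ⌈(n : ℚ) / 2⌉₊ := by omega
    rw [← h0]
    rw [zero_pow (by omega : ⌈(n : ℚ) / 2⌉₊ - 1 ≠ 0)]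
    ring
  rcases eq_or_lt_of_le hp1 with h1 | h1
  · -- p = 1 : the term is eventually 0
    apply Tendsto.congr' _
      (tendsto_const_nhds : Tendsto (fun _ : ℕ => (0:ℝ)) atTop (nhds 0))
    filter_upwards [eventually_ge_atTop 3] with n hn
    obtain ⟨hk1, hk2⟩ := aux_ceil_half n
    rw [h1, sub_self]
    rw [zero_pow (by omega : n - ⌈(n : ℚ) / 2⌉₊ ≠ 0)]
    ring
  -- main case 0 < p < 1
  set q : ℝ := 4 * p * (1 - p) with hqdef
  have hq0 : 0 < q := by have : 0 < 1 - p := by linarith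
                         positivity
  have hq1 : q < 1 := by
    have hne : 2 * p - 1 ≠ 0 := by
      intro h
      apply hp
      linarith
    have hsq : 0 < (2 * p - 1) ^ 2 := by positivity
    nlinarith
  set r : ℝ := Real.sqrt q with hrdef
  have hr0 : 0 < r := Real.sqrt_pos.mpr hq0
  have hr1 : r < 1 := by
    rw [hrdef, (show (1:ℝ) = Real.sqrt 1 by simp)]
    exact Real.sqrt_lt_sqrt hq0.le hq1
  have hr2 : r ^ 2 = q := Real.sq_sqrt hq0.le
  have hpq : p * (1 - p) = r ^ 2 / 4 := by rw [hr2]; ring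
  have h1p : 0 < 1 - p := by linarith
  apply squeeze_zero' (g := fun n : ℕ => (16 / r ^ 4) * ((n : ℝ) * r ^ n))
  · filter_upwards with n
    positivity
  · filter_upwards [eventually_ge_atTop 4] with n hn
    obtain ⟨hk1, hk2⟩ := aux_ceil_half n
    set k := ⌈(n : ℚ) / 2⌉₊ with hkdef
    have hk2' : 2 ≤ k := by omega
    have hkn : k ≤ n := by omega
    calc (k : ℝ) * (n.choose k : ℝ) * p ^ (k - 1) * (1 - p) ^ (n - k)
        ≤ (n : ℝ) * (2 : ℝ) ^ n * p ^ (k - 2) * (1 - p) ^ (k - 2) := by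
          have A : (k : ℝ) ≤ (n : ℝ) := by exact_mod_cast hkn
          have B : ((n.choose k : ℕ) : ℝ) ≤ (2 : ℝ) ^ n := by
            exact_mod_cast aux_choose_le_two_pow n k
          have C : p ^ (k - 1) ≤ p ^ (k - 2) :=
            pow_le_pow_of_le_one hp0 hp1 (by omega)
          have D : (1 - p) ^ (n - k) ≤ (1 - p) ^ (k - 2) :=
            pow_le_pow_of_le_one h1p.le (by linarith) (by omega)
          exact mul_le_mul (mul_le_mul (mul_le_mul A B (by positivity)
            (n.cast_nonneg)) C (by positivity) (by positivity)) D
            (by positivity) (by positivity)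
      _ = (n : ℝ) * ((2 : ℝ) ^ n * (p * (1 - p)) ^ (k - 2)) := by
          rw [mul_pow]; ring
      _ ≤ (n : ℝ) * (16 * r ^ (n - 4)) := by
          apply mul_le_mul_of_nonneg_left ?_ n.cast_nonneg
          rw [hpq, div_pow, mul_div_assoc']
          have h4 : ((4:ℝ)) ^ (k - 2) ≠ 0 := by positivity
          rw [div_le_iff₀ (by positivity)]
          have e1 : (r ^ 2) ^ (k - 2) = r ^ (2 * k - 4) := by
            rw [← pow_mul]; congr 1; omega
          rw [e1]
          have e2 : r ^ (2 * k - 4) ≤ r ^ (n - 4) :=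
            pow_le_pow_of_le_one hr0.le hr1.le (by omega)
          have e3 : (2 : ℝ) ^ n ≤ 16 * (4:ℝ) ^ (k - 2) := by
            have : (2 : ℝ) ^ n ≤ (2 : ℝ) ^ (2 * k) :=
              pow_le_pow_right₀ (by norm_num) hk1
            calc (2 : ℝ) ^ n ≤ (2 : ℝ) ^ (2 * k) := this
              _ = 16 * (4:ℝ) ^ (k - 2) := by
                  rw [(show (4:ℝ) = 2 ^ 2 by norm_num), ← pow_mul,
                    (show (16:ℝ) = 2 ^ 4 by norm_num), ← pow_add]
                  congr 1; omega
          calc (2 : ℝ) ^ n * r ^ (2 * k - 4)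
              ≤ (16 * (4:ℝ) ^ (k - 2)) * r ^ (n - 4) := by
                apply mul_le_mul e3 e2 (by positivity) (by positivity)
            _ = 16 * r ^ (n - 4) * (4:ℝ) ^ (k - 2) := by ring
      _ = (16 / r ^ 4) * ((n : ℝ) * r ^ n) := by
          rw [(show n = (n - 4) + 4 by omega), pow_add]
          field_simp
          ring
          congr 1; omega
  · have := (tendsto_self_mul_const_pow_of_lt_one hr0.le hr1).const_mul (16 / r ^ 4)
    simpa using this
end
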